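/- Let G be a nonabelian finite thin p-group (p prime). Then the Frattini subgroup of G equals the commutator subgroup of G, i.e., Φ(G) = [G, G], and the abelianization G/[G, G] is elementary abelian of order p². -/

import Mathlib

open Subgroup
open scoped commutatorElement

section Helpers

variable {p : ℕ} {A : Type*} [Group A]

/-- If `a` has prime order `p` and `a ^ k ≠ 1`, then `a ^ k` generates the same cyclic group. -/
lemma zpowers_zpow_eq (hp : p.Prime) {a : A} (ha : orderOf a = p) {k : ℤ} (hk : a ^ k ≠ 1) :
    Subgroup.zpowers (a ^ k) = Subgroup.zpowers a := by
  have hnd : ¬ ((p : ℤ) ∣ k) := fun h => hk (by rwa [← ha, orderOf_dvd_iff_zpow_eq_one] at h)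
  obtain ⟨u, v, huv⟩ := (Nat.prime_iff_prime_int.mp hp).coprime_iff_not_dvd.mpr hnd
  have hap : a ^ (p : ℤ) = 1 := by
    rw [← orderOf_dvd_iff_zpow_eq_one, ha]
  apply le_antisymm
  · exact zpowers_le.mpr (zpow_mem (mem_zpowers a) k)
  · apply zpowers_le.mpr
    have key : a = (a ^ k) ^ v := by
      calc a = a ^ (u * (p:ℤ) + v * k) := by rw [huv, zpow_one]
      _ = (a ^ (p:ℤ)) ^ u * (a ^ k) ^ v := by
          rw [zpow_add, ← zpow_mul, ← zpow_mul, mul_comm u, mul_comm v]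
      _ = (a ^ k) ^ v := by rw [hap, one_zpow, one_mul]
    have h2 := zpow_mem (mem_zpowers (a ^ k)) v
    rwa [← key] at h2

lemma normal_of_commutator_le {H : Subgroup A} (h : commutator A ≤ H) : H.Normal := by
  constructor
  intro a ha g
  have h1 : ⁅g, a⁆ ∈ H := h (Subgroup.commutator_mem_commutator (mem_top g) (mem_top a))
  have h2 : g * a * g⁻¹ = ⁅g, a⁆ * a := by group
  rw [h2]
  exact mul_mem h1 ha

lemma isCoatom_of_index_prime (hp : p.Prime) {H : Subgroup A} (h : H.index = p) : IsCoatom H := by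
  constructor
  · intro htop
    rw [htop, Subgroup.index_top] at h
    exact hp.ne_one h.symm
  · intro K hK
    have hdvd : K.index ∣ p := h ▸ Subgroup.index_dvd_of_le hK.le
    rcases (Nat.Prime.eq_one_or_self_of_dvd hp _ hdvd) with h1 | h1
    · exact Subgroup.index_eq_one.mp h1
    · exfalso
      have hrm := Subgroup.relIndex_mul_index hK.le
      rw [h, h1] at hrm
      have hrel : H.relIndex K = 1 := Nat.eq_of_mul_eq_mul_right hp.pos (by rw [hrm, one_mul])
      exact hK.not_ge (Subgroup.relIndex_eq_one.mp hrel)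

lemma commutator_le_coatom {M : Subgroup A} [M.Normal] (hM : IsCoatom M) : commutator A ≤ M := by
  have hsub : ∀ K : Subgroup (A ⧸ M), K = ⊥ ∨ K = ⊤ := by
    intro K
    by_cases hK : K.comap (QuotientGroup.mk' M) = M
    · left
      have := congrArg (Subgroup.map (QuotientGroup.mk' M)) hK
      rwa [Subgroup.map_comap_eq_self_of_surjective (QuotientGroup.mk'_surjective M),
        QuotientGroup.map_mk'_self] at this
    · right
      have hle : M ≤ K.comap (QuotientGroup.mk' M) := fun m hm => by
        simp only [Subgroup.mem_comap, QuotientGroup.mk'_apply,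
          (QuotientGroup.eq_one_iff m).mpr hm, one_mem]
      have := hM.2 _ (lt_of_le_of_ne hle (Ne.symm hK))
      have := congrArg (Subgroup.map (QuotientGroup.mk' M)) this
      rwa [Subgroup.map_comap_eq_self_of_surjective (QuotientGroup.mk'_surjective M),
        Subgroup.map_top_of_surjective _ (QuotientGroup.mk'_surjective M)] at this
  obtain ⟨g, hg⟩ : ∃ g : A, g ∉ M := by
    by_contra hc
    push_neg at hc
    exact hM.1 ((Subgroup.eq_top_iff' M).mpr hc)
  have hg1 : (g : A ⧸ M) ≠ 1 := by
    rwa [ne_eq, QuotientGroup.eq_one_iff g]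
  have hgen : Subgroup.zpowers ((g : A ⧸ M)) = ⊤ := by
    rcases hsub (Subgroup.zpowers ((g : A ⧸ M))) with h | h
    · exact absurd (Subgroup.zpowers_eq_bot.mp h) hg1
    · exact h
  have hcomm : ∀ u v : A ⧸ M, u * v = v * u := by
    intro u v
    obtain ⟨m, hm⟩ := Subgroup.mem_zpowers_iff.mp (hgen ▸ Subgroup.mem_top u)
    obtain ⟨n, hn⟩ := Subgroup.mem_zpowers_iff.mp (hgen ▸ Subgroup.mem_top v)
    rw [← hm, ← hn, ← zpow_add, ← zpow_add, add_comm]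
  rw [commutator_def, Subgroup.commutator_le]
  intro g₁ _ g₂ _
  rw [← QuotientGroup.ker_mk' M, MonoidHom.mem_ker, map_commutatorElement,
    commutatorElement_eq_one_iff_mul_comm]
  exact hcomm _ _

lemma antichain_package {n : ℕ} (g : Fin n → A)
    (h : ∀ i j : Fin n, i ≠ j → g i ∉ zpowers (g j)) :
    ∃ S : Set (Subgroup A), IsAntichain (· ≤ ·) S ∧ S.ncard = n := by
  refine ⟨Set.range (fun i => zpowers (g i)), ?_, ?_⟩
  · rintro _ ⟨i, rfl⟩ _ ⟨j, rfl⟩ hne hle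
    have hij : i ≠ j := by rintro rfl; exact hne rfl
    exact h i j hij (hle (mem_zpowers _))
  · have hinj : Function.Injective (fun i : Fin n => zpowers (g i)) := by
      intro i j hij
      by_contra hne
      have heq : zpowers (g i) = zpowers (g j) := hij
      exact h i j hne (heq ▸ mem_zpowers (g i))
    rw [← Set.image_univ, Set.ncard_image_of_injective _ hinj, Set.ncard_univ,
      Nat.card_eq_fintype_card, Fintype.card_fin]

end Helpers

section CommHelpers

variable {p e : ℕ} {A : Type*} [CommGroup A]

lemma zsplit {x z : A} {a b c d : ℤ} (h : x ^ a * z ^ b = x ^ c * z ^ d) :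
    x ^ (a - c) = z ^ (d - b) := by
  rw [zpow_sub, zpow_sub, ← div_eq_mul_inv, ← div_eq_mul_inv,
    div_eq_div_iff_mul_eq_mul, h]
  exact mul_comm _ _

lemma exists_z_aux (hp : p.Prime) (hexp : Monoid.exponent A = p ^ e) (he : 1 ≤ e)
    {x : A} (hx : orderOf x = p ^ e) :
    ∀ m (y : A), y ∉ zpowers x → y ^ p ^ m ∈ zpowers x →
      ∃ z, z ∉ zpowers x ∧ z ^ p = 1 := by
  intro m
  induction m with
  | zero =>
    intro y hy h
    rw [pow_zero, pow_one] at h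
    exact absurd h hy
  | succ m ih =>
    intro y hy h
    by_cases hyp : y ^ p ∈ zpowers x
    · obtain ⟨k, hk⟩ := mem_zpowers_iff.mp hyp
      have hpe : p * p ^ (e - 1) = p ^ e := by
        rw [← pow_succ']
        congr 1
        omega
      have hy1 : y ^ p ^ e = 1 := by
        rw [← hexp]
        exact Monoid.pow_exponent_eq_one y
      have h1 : x ^ (k * (p : ℤ) ^ (e - 1)) = 1 := by
        rw [zpow_mul, hk, ← Int.natCast_pow, zpow_natCast, ← pow_mul, hpe, hy1]
      have h2 : ((p : ℤ) ^ e) ∣ k * (p : ℤ) ^ (e - 1) := by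
        rw [← Int.natCast_pow, ← hx, orderOf_dvd_iff_zpow_eq_one]
        exact h1
      have h3 : (p : ℤ) ∣ k := by
        have hfac : (p : ℤ) ^ e = (p : ℤ) ^ (e - 1) * (p : ℤ) := by
          rw [← pow_succ]
          congr 1
          omega
        rw [hfac, mul_comm k] at h2
        exact (mul_dvd_mul_iff_left (pow_ne_zero (e - 1)
          (Int.natCast_ne_zero.mpr hp.pos.ne'))).mp h2
      obtain ⟨j, hj⟩ := h3
      refine ⟨y * x ^ (-j), fun hz => hy ?_, ?_⟩
      · have hyy : y = (y * x ^ (-j)) * x ^ j := by group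
        rw [hyy]
        exact mul_mem hz (zpow_mem (mem_zpowers x) j)
      · have hmp : (y * x ^ (-j)) ^ p = y ^ p * (x ^ (-j)) ^ (p : ℕ) := mul_pow _ _ _
        rw [hmp, ← hk, ← zpow_natCast (x ^ (-j)), ← zpow_mul, ← zpow_add, hj,
          show (p:ℤ) * j + -j * (p:ℕ) = 0 by ring, zpow_zero]
    · apply ih (y ^ p) hyp
      rw [← pow_mul, ← pow_succ']
      exact h

lemma exists_z (hp : p.Prime) (hexp : Monoid.exponent A = p ^ e) (he : 1 ≤ e)
    {x : A} (hx : orderOf x = p ^ e) (hnt : Subgroup.zpowers x ≠ ⊤) :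
    ∃ z, z ∉ zpowers x ∧ z ^ p = 1 := by
  obtain ⟨y, hy⟩ : ∃ y : A, y ∉ zpowers x := by
    by_contra hc
    push_neg at hc
    exact hnt ((Subgroup.eq_top_iff' _).mpr hc)
  refine exists_z_aux hp hexp he hx e y hy ?_
  rw [← hexp, Monoid.pow_exponent_eq_one]
  exact one_mem _

-- expansion helpers
lemma expandC {x z : A} (i : ℕ) (k : ℤ) :
    (x * z ^ i) ^ k = x ^ k * z ^ ((i : ℤ) * k) := by
  rw [mul_zpow, ← zpow_natCast z i, ← zpow_mul]

lemma expandP {x z : A} (k : ℤ) :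
    ((x ^ p) * z) ^ k = x ^ ((p : ℤ) * k) * z ^ k := by
  rw [mul_zpow, ← zpow_natCast x p, ← zpow_mul]

lemma common_facts (hp : p.Prime) {x z : A} (hx1 : x ≠ 1)
    (hpd : ∀ {t : ℤ}, x ^ t = 1 → (p : ℤ) ∣ t)
    (hzd : ∀ {t : ℤ}, z ^ t = 1 → (p : ℤ) ∣ t)
    (H2 : ∀ k m : ℤ, x ^ k = z ^ m → x ^ k = 1 ∧ z ^ m = 1) :
    (∀ i : ℕ, z ∉ zpowers (x * z ^ i)) ∧
    (∀ i : ℕ, x * z ^ i ∉ zpowers z) ∧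
    (∀ i j : ℕ, i < p → j < p → i ≠ j → x * z ^ i ∉ zpowers (x * z ^ j)) := by
  have hp1 : ¬ ((p : ℤ) ∣ 1) := fun h => by
    have := Int.le_of_dvd one_pos h
    have := hp.one_lt
    omega
  refine ⟨?_, ?_, ?_⟩
  · intro i hmem
    obtain ⟨k, hk⟩ := mem_zpowers_iff.mp hmem
    rw [expandC] at hk
    have hk' : x ^ k * z ^ ((i:ℤ) * k) = x ^ (0:ℤ) * z ^ (1:ℤ) := by
      rw [zpow_zero, one_mul, zpow_one]; exact hk
    obtain ⟨e1, e2⟩ := H2 _ _ (zsplit hk')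
    have d1 := hpd e1
    have d2 := hzd e2
    rw [sub_zero] at d1
    exact hp1 (by
      have h1 : (1:ℤ) = (1 - (i:ℤ)*k) + i*k := by ring
      rw [h1]
      exact dvd_add d2 (d1.mul_left i))
  · intro i hmem
    obtain ⟨k, hk⟩ := mem_zpowers_iff.mp hmem
    have hk' : x ^ (0:ℤ) * z ^ k = x ^ (1:ℤ) * z ^ ((i:ℤ)) := by
      rw [zpow_zero, one_mul, zpow_one, zpow_natCast]; exact hk
    have e1 := (H2 _ _ (zsplit hk')).1
    rw [show (0:ℤ) - 1 = -1 by ring, zpow_neg, zpow_one, inv_eq_one] at e1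
    exact hx1 e1
  · intro i j hi hj hij hmem
    obtain ⟨k, hk⟩ := mem_zpowers_iff.mp hmem
    rw [expandC] at hk
    have hk' : x ^ k * z ^ ((j:ℤ) * k) = x ^ (1:ℤ) * z ^ ((i:ℤ)) := by
      rw [zpow_one, zpow_natCast]; exact hk
    obtain ⟨e1, e2⟩ := H2 _ _ (zsplit hk')
    have d1 := hpd e1
    have d2 := hzd e2
    have dij : (p:ℤ) ∣ (i:ℤ) - j := by
      have h1 : (i:ℤ) - j = ((i:ℤ) - j*k) + j*(k - 1) := by ring
      rw [h1]
      exact dvd_add d2 (d1.mul_left j)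
    have habs : p ∣ ((i:ℤ) - j).natAbs := by
      rwa [Int.natCast_dvd] at dij
    have hlt : ((i:ℤ) - j).natAbs < p := by omega
    have := Nat.eq_zero_of_dvd_of_lt habs hlt
    omega

end CommHelpers

section Antichains

variable {p : ℕ} {A : Type*} [CommGroup A]

lemma antichain_A1 (hp : p.Prime) {x z : A} (hx : orderOf x = p ^ 2) (hz : orderOf z = p)
    (H2 : ∀ k m : ℤ, x ^ k = z ^ m → x ^ k = 1 ∧ z ^ m = 1) :
    ∃ S : Set (Subgroup A), IsAntichain (· ≤ ·) S ∧ S.ncard = p + 2 := by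
  have hp1 : ¬ ((p : ℤ) ∣ 1) := fun h => by
    have := Int.le_of_dvd one_pos h
    have := hp.one_lt
    omega
  have hpd2 : ∀ {t : ℤ}, x ^ t = 1 → ((p : ℤ)^2) ∣ t := by
    intro t h
    have := orderOf_dvd_iff_zpow_eq_one.mpr h
    rwa [hx, Nat.cast_pow] at this
  have hpp2 : (p:ℤ) ∣ (p:ℤ)^2 := dvd_pow_self _ two_ne_zero
  have hpd : ∀ {t : ℤ}, x ^ t = 1 → (p : ℤ) ∣ t := fun h => hpp2.trans (hpd2 h)
  have hzd : ∀ {t : ℤ}, z ^ t = 1 → (p : ℤ) ∣ t := by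
    intro t h
    have := orderOf_dvd_iff_zpow_eq_one.mpr h
    rwa [hz] at this
  have hx1 : x ≠ 1 := by
    intro h
    rw [h, orderOf_one] at hx
    nlinarith [hp.one_lt]
  obtain ⟨f1, f2, f7⟩ := common_facts hp hx1 (fun h => hpd h) (fun h => hzd h) H2
  -- f3 : x^p * z ∉ zpowers (x * z^i)
  have f3 : ∀ i : ℕ, x ^ p * z ∉ zpowers (x * z ^ i) := by
    intro i hmem
    obtain ⟨k, hk⟩ := mem_zpowers_iff.mp hmem
    rw [expandC] at hk
    have hk' : x ^ k * z ^ ((i:ℤ) * k) = x ^ ((p:ℕ):ℤ) * z ^ (1:ℤ) := by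
      rw [zpow_natCast, zpow_one]; exact hk
    obtain ⟨e1, e2⟩ := H2 _ _ (zsplit hk')
    have d1 := hpd2 e1
    have d2 := hzd e2
    have dk : (p:ℤ) ∣ k := by
      have h1 : k = (k - (p:ℕ)) + p := by ring
      rw [h1]
      exact dvd_add (hpp2.trans d1) dvd_rfl
    exact hp1 (by
      have h1 : (1:ℤ) = (1 - (i:ℤ)*k) + i*k := by ring
      rw [h1]
      exact dvd_add d2 (dk.mul_left i))
  -- f4 : x * z^i ∉ zpowers (x^p * z)
  have f4 : ∀ i : ℕ, x * z ^ i ∉ zpowers (x ^ p * z) := by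
    intro i hmem
    obtain ⟨k, hk⟩ := mem_zpowers_iff.mp hmem
    rw [expandP] at hk
    have hk' : x ^ ((p:ℤ) * k) * z ^ k = x ^ (1:ℤ) * z ^ ((i:ℤ)) := by
      rw [zpow_one, zpow_natCast]; exact hk
    obtain ⟨e1, e2⟩ := H2 _ _ (zsplit hk')
    have d1 := hpd2 e1
    exact hp1 (by
      have h1 : (1:ℤ) = p*k - ((p:ℤ)*k - 1) := by ring
      rw [h1]
      exact dvd_sub (Dvd.dvd.mul_right dvd_rfl k) (hpp2.trans d1))
  -- f5 : z ∉ zpowers (x^p * z)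
  have f5 : z ∉ zpowers (x ^ p * z) := by
    intro hmem
    obtain ⟨k, hk⟩ := mem_zpowers_iff.mp hmem
    rw [expandP] at hk
    have hk' : x ^ ((p:ℤ) * k) * z ^ k = x ^ (0:ℤ) * z ^ (1:ℤ) := by
      rw [zpow_zero, one_mul, zpow_one]; exact hk
    obtain ⟨e1, e2⟩ := H2 _ _ (zsplit hk')
    have d1 := hpd2 e1
    have d2 := hzd e2
    rw [sub_zero] at d1
    have dk : (p:ℤ) ∣ k := by
      rw [sq] at d1
      exact (mul_dvd_mul_iff_left (show (p:ℤ) ≠ 0 from Int.natCast_ne_zero.mpr hp.pos.ne')).mp d1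
    exact hp1 (by
      have h1 : (1:ℤ) = (1 - k) + k := by ring
      rw [h1]
      exact dvd_add d2 dk)
  -- f6 : x^p * z ∉ zpowers z
  have f6 : x ^ p * z ∉ zpowers z := by
    intro hmem
    obtain ⟨k, hk⟩ := mem_zpowers_iff.mp hmem
    have hk' : x ^ (0:ℤ) * z ^ k = x ^ ((p:ℕ):ℤ) * z ^ (1:ℤ) := by
      rw [zpow_zero, one_mul, zpow_natCast, zpow_one]; exact hk
    have e1 := (H2 _ _ (zsplit hk')).1
    have d1 := hpd2 e1
    rw [zero_sub] at d1
    have hle : (p:ℤ)^2 ≤ p :=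
      Int.le_of_dvd (Int.natCast_pos.mpr hp.pos) (dvd_neg.mp d1)
    have h2 : (2:ℤ) ≤ p := by exact_mod_cast hp.two_le
    nlinarith
  -- package
  apply antichain_package (n := p + 2)
    (fun i => if (i:ℕ) = 0 then z else if (i:ℕ) = 1 then x ^ p * z else x * z ^ ((i:ℕ) - 2))
  intro i j hne
  have hi := i.isLt
  have hj := j.isLt
  have hij : (i:ℕ) ≠ (j:ℕ) := fun h => hne (Fin.ext h)
  split_ifs with h1 h2 h3 h4 h5 h6 h7 h8 h9
  all_goals first
    | omega
    | exact f5
    | exact f1 _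
    | exact f6
    | exact f3 _
    | exact f2 _
    | exact f4 _
    | exact f7 _ _ (by omega) (by omega) (by omega)

lemma antichain_A2 (hp : p.Prime) {x z u : A} (hx : orderOf x = p) (hz : orderOf z = p)
    (hu : orderOf u = p)
    (H2 : ∀ k m : ℤ, x ^ k = z ^ m → x ^ k = 1 ∧ z ^ m = 1)
    (huJ : u ∉ zpowers x ⊔ zpowers z) :
    ∃ S : Set (Subgroup A), IsAntichain (· ≤ ·) S ∧ S.ncard = p + 2 := by
  set J := zpowers x ⊔ zpowers z with hJdef
  have hxJ : x ∈ J := Subgroup.mem_sup_left (mem_zpowers x)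
  have hzJ : z ∈ J := Subgroup.mem_sup_right (mem_zpowers z)
  have hCJ : ∀ i : ℕ, zpowers (x * z ^ i) ≤ J :=
    fun i => zpowers_le.mpr (mul_mem hxJ (pow_mem hzJ i))
  have hx1 : x ≠ 1 := by
    intro h
    rw [h, orderOf_one] at hx
    exact hp.ne_one hx.symm
  have hz1 : z ≠ 1 := by
    intro h
    rw [h, orderOf_one] at hz
    exact hp.ne_one hz.symm
  have hpd : ∀ {t : ℤ}, x ^ t = 1 → (p : ℤ) ∣ t := by
    intro t h
    have := orderOf_dvd_iff_zpow_eq_one.mpr h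
    rwa [hx] at this
  have hzd : ∀ {t : ℤ}, z ^ t = 1 → (p : ℤ) ∣ t := by
    intro t h
    have := orderOf_dvd_iff_zpow_eq_one.mpr h
    rwa [hz] at this
  obtain ⟨f1, f2, f7⟩ := common_facts hp hx1 (fun h => hpd h) (fun h => hzd h) H2
  have g3 : ∀ i : ℕ, u ∉ zpowers (x * z ^ i) := fun i hmem => huJ (hCJ i hmem)
  have g4 : u ∉ zpowers z := fun hmem => huJ (Subgroup.mem_sup_right hmem)
  have g5 : z ∉ zpowers u := by
    intro hmem
    obtain ⟨k, hk⟩ := mem_zpowers_iff.mp hmem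
    have hk1 : u ^ k ≠ 1 := by rw [hk]; exact hz1
    have := zpowers_zpow_eq hp hu hk1
    apply huJ
    apply Subgroup.mem_sup_right
    have hu_in : u ∈ zpowers (u ^ k) := this ▸ mem_zpowers u
    rw [hk] at hu_in
    exact zpowers_le.mpr hu_in (mem_zpowers u)
  have g6 : ∀ i : ℕ, x * z ^ i ∉ zpowers u := by
    intro i hmem
    obtain ⟨k, hk⟩ := mem_zpowers_iff.mp hmem
    by_cases hk1 : u ^ k = 1
    · rw [hk1] at hk
      have hxz : x ^ (1:ℤ) = z ^ (-(i:ℤ)) := by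
        rw [zpow_one, zpow_neg, zpow_natCast]
        exact eq_inv_of_mul_eq_one_right (mul_comm x (z ^ i) ▸ hk.symm)
      have := (H2 _ _ hxz).1
      rw [zpow_one] at this
      exact hx1 this
    · have heq := zpowers_zpow_eq hp hu hk1
      apply huJ
      have hu_in : u ∈ zpowers (u ^ k) := heq ▸ mem_zpowers u
      rw [hk] at hu_in
      exact hCJ i (zpowers_le.mpr hu_in (mem_zpowers u))
  apply antichain_package (n := p + 2)
    (fun i => if (i:ℕ) = 0 then u else if (i:ℕ) = 1 then z else x * z ^ ((i:ℕ) - 2))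
  intro i j hne
  have hi := i.isLt
  have hj := j.isLt
  have hij : (i:ℕ) ≠ (j:ℕ) := fun h => hne (Fin.ext h)
  split_ifs with h1 h2 h3 h4 h5 h6 h7 h8 h9
  all_goals first
    | omega
    | exact g4
    | exact g3 _
    | exact g5
    | exact f1 _
    | exact g6 _
    | exact f2 _
    | exact f7 _ _ (by omega) (by omega) (by omega)

end Antichains

section Main

open Pointwise

variable {p : ℕ} {A : Type*} [CommGroup A]

lemma exists_antichain (hp : p.Prime) [Finite A] (hA : IsPGroup p A)
    (hnc : ∀ a : A, zpowers a ≠ ⊤) (hcard : p ^ 3 ≤ Nat.card A) :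
    ∃ S : Set (Subgroup A), IsAntichain (· ≤ ·) S ∧ S.ncard = p + 2 := by
  haveI := Fact.mk hp
  obtain ⟨n, hn⟩ := IsPGroup.iff_card.mp hA
  obtain ⟨e, _, hexp⟩ := (Nat.dvd_prime_pow hp).mp
    (hn ▸ (Group.exponent_dvd_nat_card (G := A)))
  have hp2 := hp.two_le
  haveI hnt : Nontrivial A := by
    rcases subsingleton_or_nontrivial A with hs | hs
    · exfalso
      have hc1 : Nat.card A = 1 := Nat.card_of_subsingleton (1 : A)
      have : 1 < p ^ 3 := Nat.one_lt_pow (by omega) (by omega)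
      omega
    · exact hs
  have he1 : 1 ≤ e := by
    by_contra h
    have he0 : e = 0 := by omega
    rw [he0, pow_zero, Monoid.exp_eq_one_iff] at hexp
    exact not_subsingleton A hexp
  obtain ⟨x, hx⟩ := Monoid.exists_orderOf_eq_exponent (Monoid.ExponentExists.of_finite (G := A))
  rw [hexp] at hx
  obtain ⟨z, hzx, hzp⟩ := exists_z hp hexp he1 hx (hnc x)
  have hz1 : z ≠ 1 := fun h => hzx (h ▸ one_mem _)
  have hz : orderOf z = p := orderOf_eq_prime hzp hz1
  have hxz : ∀ k m : ℤ, x ^ k = z ^ m → x ^ k = 1 ∧ z ^ m = 1 := by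
    intro k m h
    by_cases hzm : z ^ m = 1
    · exact ⟨by rw [h]; exact hzm, hzm⟩
    · exfalso
      apply hzx
      have heq := zpowers_zpow_eq hp hz hzm
      have hz_in : z ∈ zpowers (z ^ m) := heq ▸ mem_zpowers z
      rw [← h] at hz_in
      exact zpowers_le.mpr (zpow_mem (mem_zpowers x) k) hz_in
  rcases Nat.lt_or_ge e 2 with he2 | he2
  · -- e = 1
    have he : e = 1 := by omega
    rw [he, pow_one] at hexp hx
    set J := zpowers x ⊔ zpowers z with hJdef
    have hcardJ : Nat.card J ≤ p * p := by
      have hset : ((J : Set A)) = (zpowers x : Set A) * (zpowers z : Set A) :=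
        Subgroup.mul_normal (zpowers x) (zpowers z)
      calc Nat.card J = Nat.card ((J : Set A)) := by rw [SetLike.coe_sort_coe]
      _ = Nat.card ((zpowers x : Set A) * (zpowers z : Set A) : Set A) := by rw [hset]
      _ ≤ Nat.card ((zpowers x : Set A)) * Nat.card ((zpowers z : Set A)) :=
          Set.natCard_mul_le
      _ = p * p := by
          rw [SetLike.coe_sort_coe, SetLike.coe_sort_coe, Nat.card_zpowers,
            Nat.card_zpowers, hx, hz]
    obtain ⟨u, hu⟩ : ∃ u : A, u ∉ J := by
      by_contra hc
      push_neg at hc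
      have : J = ⊤ := (Subgroup.eq_top_iff' J).mpr hc
      rw [this, Subgroup.card_top] at hcardJ
      nlinarith
    have hu1 : u ≠ 1 := fun h => hu (h ▸ one_mem J)
    have hup : u ^ p = 1 := by
      rw [← hexp]
      exact Monoid.pow_exponent_eq_one u
    have huord : orderOf u = p := orderOf_eq_prime hup hu1
    exact antichain_A2 hp hx hz huord hxz hu
  · -- e ≥ 2
    set x' := x ^ (p ^ (e - 2)) with hx'def
    have hdvd' : p ^ (e - 2) ∣ p ^ e := pow_dvd_pow p (by omega)
    have hordx' : orderOf x' = p ^ 2 := by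
      rw [hx'def, orderOf_pow, hx, Nat.gcd_eq_right hdvd', Nat.pow_div (by omega) hp.pos]
      congr 1
      omega
    have H2' : ∀ k m : ℤ, x' ^ k = z ^ m → x' ^ k = 1 ∧ z ^ m = 1 := by
      intro k m h
      rw [hx'def, ← zpow_natCast x (p ^ (e-2)), ← zpow_mul] at h ⊢
      exact hxz _ m h
    exact antichain_A1 hp hordx' hz H2'

end Main

/-- A finite `p`-group is *thin* if every antichain in the lattice of its normal subgroups
contains at most `p + 1` elements. -/
def IsThinPGroup (p : ℕ) (G : Type*) [Group G] : Prop :=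
  ∀ S : Set (Subgroup G), (∀ N ∈ S, N.Normal) → IsAntichain (· ≤ ·) S → S.ncard ≤ p + 1

/-- In a nonabelian finite thin `p`-group, the Frattini subgroup equals the commutator
subgroup, and the abelianization is elementary abelian of order `p ^ 2`. -/
theorem thin_p_group_frattini_eq_commutator
    {p : ℕ} (hp : p.Prime) {G : Type*} [Group G] [Finite G]
    (hpG : IsPGroup p G) (hthin : IsThinPGroup p G)
    (hna : ∃ a b : G, a * b ≠ b * a) :
    frattini G = commutator G ∧
    Nat.card (G ⧸ commutator G) = p ^ 2 ∧
    ∀ x : G ⧸ commutator G, x ^ p = 1 := by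
  haveI := Fact.mk hp
  set Q := G ⧸ commutator G with hQdef
  -- commutative group structure on the abelianization
  have mul_comm' : ∀ a b : Q, a * b = b * a := by
    intro a b
    induction a using QuotientGroup.induction_on with
    | H g =>
    induction b using QuotientGroup.induction_on with
    | H h =>
    rw [← QuotientGroup.mk_mul, ← QuotientGroup.mk_mul, QuotientGroup.eq]
    have hcomm : (g * h)⁻¹ * (h * g) = ⁅h⁻¹, g⁻¹⁆ := by group
    rw [hcomm, commutator_def]
    exact Subgroup.commutator_mem_commutator (mem_top _) (mem_top _)
  letI : CommGroup Q := { (inferInstance : Group Q) with mul_comm := mul_comm' }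
  haveI : Finite (Subgroup G) := Finite.of_injective _ SetLike.coe_injective
  -- commutator is contained in the Frattini subgroup
  have hcf : commutator G ≤ frattini G := by
    haveI : Group.IsNilpotent G := hpG.isNilpotent
    have hnorm := normalizerCondition_of_isNilpotent (G := G)
    rw [frattini, Order.radical]
    refine le_iInf fun M => le_iInf fun hM => ?_
    haveI : M.Normal := Subgroup.NormalizerCondition.normal_of_coatom M hnorm hM
    exact commutator_le_coatom hM
  -- thinness transfers to antichains of subgroups of Q
  have hthinQ : ∀ S : Set (Subgroup Q), IsAntichain (· ≤ ·) S → S.ncard ≤ p + 1 := by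
    intro S hS
    have hsurj := QuotientGroup.mk'_surjective (commutator G)
    set f := Subgroup.comap (QuotientGroup.mk' (commutator G)) with hfdef
    have h1 : ∀ N ∈ f '' S, N.Normal := by
      rintro _ ⟨T, _, rfl⟩
      apply normal_of_commutator_le
      rw [← QuotientGroup.ker_mk' (commutator G)]
      exact Subgroup.ker_le_comap (f := QuotientGroup.mk' (_root_.commutator G)) T
    have h2 : IsAntichain (· ≤ ·) (f '' S) := by
      rintro _ ⟨T1, hT1, rfl⟩ _ ⟨T2, hT2, rfl⟩ hne hle
      have hTne : T1 ≠ T2 := fun h => hne (by rw [h])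
      apply hS hT1 hT2 hTne
      have hmm := Subgroup.map_mono (f := QuotientGroup.mk' (commutator G)) hle
      rwa [hfdef, Subgroup.map_comap_eq_self_of_surjective hsurj,
        Subgroup.map_comap_eq_self_of_surjective hsurj] at hmm
    have h3 := hthin (f '' S) h1 h2
    rwa [Set.ncard_image_of_injective S (Subgroup.comap_injective hsurj)] at h3
  -- Q is not cyclic
  have hnc : ∀ a : Q, zpowers a ≠ ⊤ := by
    intro a ha
    obtain ⟨g, rfl⟩ := QuotientGroup.mk'_surjective (commutator G) a
    have htop : zpowers g ⊔ commutator G = ⊤ := by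
      have hker : (QuotientGroup.mk' (commutator G)).ker ≤ zpowers g ⊔ commutator G := by
        rw [QuotientGroup.ker_mk']
        exact le_sup_right
      have hmap : Subgroup.map (QuotientGroup.mk' (commutator G))
          (zpowers g ⊔ commutator G) = ⊤ := by
        apply le_antisymm le_top
        calc (⊤ : Subgroup Q) = zpowers ((QuotientGroup.mk' (commutator G)) g) := ha.symm
        _ = Subgroup.map (QuotientGroup.mk' (commutator G)) (zpowers g) :=
            (MonoidHom.map_zpowers _ g).symm
        _ ≤ _ := Subgroup.map_mono le_sup_left
      have hcm := congrArg (Subgroup.comap (QuotientGroup.mk' (commutator G))) hmap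
      rwa [Subgroup.comap_map_eq_self hker, Subgroup.comap_top] at hcm
    have htop2 : zpowers g ⊔ frattini G = ⊤ := by
      rw [eq_top_iff, ← htop]
      exact sup_le_sup_left hcf _
    have hcyc : zpowers g = ⊤ := frattini_nongenerating htop2
    obtain ⟨a, b, hab⟩ := hna
    obtain ⟨m, hm⟩ := mem_zpowers_iff.mp (hcyc ▸ mem_top a)
    obtain ⟨k, hk⟩ := mem_zpowers_iff.mp (hcyc ▸ mem_top b)
    apply hab
    rw [← hm, ← hk, ← zpow_add, ← zpow_add, add_comm]
  -- the order of Q is p ^ 2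
  obtain ⟨n, hn⟩ := IsPGroup.iff_card.mp (hpG.to_quotient (commutator G))
  have hn2 : n = 2 := by
    by_contra hne2
    rcases Nat.lt_or_ge n 2 with h | h
    · interval_cases n
      · rw [pow_zero] at hn
        haveI : Subsingleton Q := (Nat.card_eq_one_iff_unique.mp hn).1
        apply hnc 1
        rw [eq_top_iff']
        intro q
        rw [Subsingleton.elim q 1]
        exact one_mem _
      · rw [pow_one] at hn
        haveI hcyc : IsCyclic Q := isCyclic_of_prime_card hn
        obtain ⟨g, hg⟩ := hcyc.exists_generator
        exact hnc g ((Subgroup.eq_top_iff' _).mpr hg)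
    · have h3 : 3 ≤ n := by omega
      have hge : p ^ 3 ≤ Nat.card Q := by
        rw [hn]
        exact Nat.pow_le_pow_right hp.pos h3
      obtain ⟨S, hanti, hcardS⟩ := exists_antichain hp (hpG.to_quotient _) hnc hge
      have := hthinQ S hanti
      omega
  rw [hn2] at hn
  -- exponent p
  have hxp1 : ∀ x : Q, x ^ p = 1 := by
    intro x
    have hdvd : orderOf x ∣ p ^ 2 := hn ▸ orderOf_dvd_natCard x
    obtain ⟨k, hk2, hord⟩ := (Nat.dvd_prime_pow hp).mp hdvd
    rcases Nat.lt_or_ge k 2 with hk | hk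
    · have hd : orderOf x ∣ p := by
        rw [hord]
        have hdd := pow_dvd_pow p (show k ≤ 1 by omega)
        rwa [pow_one] at hdd
      exact orderOf_dvd_iff_pow_eq_one.mp hd
    · exfalso
      apply hnc x
      have hk2' : k = 2 := by omega
      subst hk2'
      apply Subgroup.eq_top_of_card_eq
      rw [Nat.card_zpowers, hord, hn]
  refine ⟨?_, hn, hxp1⟩
  -- frattini = commutator
  apply le_antisymm _ hcf
  haveI : Nontrivial Q := by
    rcases subsingleton_or_nontrivial Q with hs | hs
    · exfalso
      have hc1 : Nat.card Q = 1 := Nat.card_of_subsingleton (1 : Q)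
      have hp2 := hp.two_le
      rw [hn] at hc1
      nlinarith
    · exact hs
  obtain ⟨x, hx1⟩ := exists_ne (1 : Q)
  have hxord : orderOf x = p := orderOf_eq_prime (hxp1 x) hx1
  obtain ⟨z, hzx⟩ : ∃ z : Q, z ∉ zpowers x := by
    by_contra hc
    push_neg at hc
    exact hnc x ((Subgroup.eq_top_iff' _).mpr hc)
  have hz1 : z ≠ 1 := fun h => hzx (h ▸ one_mem _)
  have hzord : orderOf z = p := orderOf_eq_prime (hxp1 z) hz1
  have hinter : zpowers x ⊓ zpowers z = ⊥ := by
    rw [eq_bot_iff]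
    intro w hw
    rw [Subgroup.mem_inf] at hw
    obtain ⟨hwx, hwz⟩ := hw
    obtain ⟨m, hm⟩ := mem_zpowers_iff.mp hwz
    by_cases hw1 : z ^ m = 1
    · rw [mem_bot, ← hm]
      exact hw1
    · exfalso
      apply hzx
      have heq := zpowers_zpow_eq hp hzord hw1
      have hz_in : z ∈ zpowers (z ^ m) := heq ▸ mem_zpowers z
      rw [hm] at hz_in
      exact zpowers_le.mpr hwx hz_in
  have hindex : ∀ a : Q, orderOf a = p → (zpowers a).index = p := by
    intro a ha
    have hci := Subgroup.card_mul_index (zpowers a)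
    rw [Nat.card_zpowers, ha, hn] at hci
    apply Nat.eq_of_mul_eq_mul_left hp.pos
    rw [hci, pow_two]
  have hcoatom : ∀ a : Q, orderOf a = p →
      IsCoatom (Subgroup.comap (QuotientGroup.mk' (commutator G)) (zpowers a)) := by
    intro a ha
    apply isCoatom_of_index_prime hp
    rw [Subgroup.index_comap_of_surjective _ (QuotientGroup.mk'_surjective _)]
    exact hindex a ha
  have h1 := frattini_le_coatom (hcoatom x hxord)
  have h2 := frattini_le_coatom (hcoatom z hzord)
  have hle2 : frattini G ≤
      Subgroup.comap (QuotientGroup.mk' (commutator G)) (zpowers x) ⊓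
      Subgroup.comap (QuotientGroup.mk' (commutator G)) (zpowers z) := le_inf h1 h2
  rwa [← Subgroup.comap_inf, hinter, MonoidHom.comap_bot, QuotientGroup.ker_mk'] at hle2
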